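/- Let Φ₁ act on single-qudit operators and Φ₂ on two-qudit operators via the brickwork construction: Φ₂(ρ) = (1/d)·Tr₁[(U⊗I)(I⊗U)(ρ ⊗ I)(I⊗U†)(U†⊗I)] restricted appropriately. If Φ₁(A) = z·A, then Φ₂(A ⊗ I) = z·(A ⊗ I). Consequently the spectrum of Φ₁ is a subset of the spectrum of Φ₂. -/
import Mathlib


open Matrix Kronecker

noncomputable section

/-- The partial trace over the first factor of a two-qudit space. -/
def partialTrace₁ {d : ℕ} (M : Matrix (Fin d × Fin d) (Fin d × Fin d) ℂ) :
    Matrix (Fin d) (Fin d) ℂ :=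
  Matrix.of fun j j' => ∑ i : Fin d, M (i, j) (i, j')

/-- The partial trace over the first factor of a three-qudit space. -/
def partialTrace₁' {d : ℕ}
    (M : Matrix (Fin d × Fin d × Fin d) (Fin d × Fin d × Fin d) ℂ) :
    Matrix (Fin d × Fin d) (Fin d × Fin d) ℂ :=
  Matrix.of fun j j' => ∑ i : Fin d, M (i, j) (i, j')

/-- `U` acting on qudits 1 and 2 of a three-qudit chain. -/
def U12 {d : ℕ} (U : Matrix (Fin d × Fin d) (Fin d × Fin d) ℂ) :
    Matrix (Fin d × Fin d × Fin d) (Fin d × Fin d × Fin d) ℂ :=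
  Matrix.of fun p q => U (p.1, p.2.1) (q.1, q.2.1) * (if p.2.2 = q.2.2 then 1 else 0)

/-- `U` acting on qudits 2 and 3 of a three-qudit chain. -/
def U23 {d : ℕ} (U : Matrix (Fin d × Fin d) (Fin d × Fin d) ℂ) :
    Matrix (Fin d × Fin d × Fin d) (Fin d × Fin d × Fin d) ℂ :=
  Matrix.of fun p q => (if p.1 = q.1 then 1 else 0) * U p.2 q.2

/-- A two-qudit operator extended by the identity on a third qudit. -/
def extendId {d : ℕ} (ρ : Matrix (Fin d × Fin d) (Fin d × Fin d) ℂ) :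
    Matrix (Fin d × Fin d × Fin d) (Fin d × Fin d × Fin d) ℂ :=
  Matrix.of fun p q => ρ (p.1, p.2.1) (q.1, q.2.1) * (if p.2.2 = q.2.2 then 1 else 0)

namespace BrickAux
variable {d : ℕ}

lemma U23_mul_U23 (V W : Matrix (Fin d × Fin d) (Fin d × Fin d) ℂ) :
    U23 V * U23 W = U23 (V * W) := by
  ext p q
  simp [U23, Matrix.mul_apply, Fintype.sum_prod_type, ite_mul, mul_ite,
    Finset.sum_ite_eq, Finset.sum_ite_eq', Finset.mul_sum]

lemma U23_conjTranspose (V : Matrix (Fin d × Fin d) (Fin d × Fin d) ℂ) :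
    (U23 V)ᴴ = U23 Vᴴ := by
  ext p q
  simp [U23, Matrix.conjTranspose_apply, apply_ite (starRingEnd ℂ), eq_comm]

lemma U23_one : U23 (1 : Matrix (Fin d × Fin d) (Fin d × Fin d) ℂ) = 1 := by
  ext p q
  simp only [U23, Matrix.of_apply, Matrix.one_apply, Prod.ext_iff, ite_and,
    mul_ite, mul_one, mul_zero, ite_mul, one_mul, zero_mul]
  split_ifs <;> simp_all

lemma U12_mul_extendId (V N : Matrix (Fin d × Fin d) (Fin d × Fin d) ℂ) :
    U12 V * extendId N = extendId (V * N) := by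
  ext p q
  simp [U12, extendId, Matrix.mul_apply, Fintype.sum_prod_type, ite_mul, mul_ite,
    Finset.sum_ite_eq, Finset.sum_ite_eq', Finset.mul_sum, Finset.sum_mul]

lemma extendId_mul_U12 (V N : Matrix (Fin d × Fin d) (Fin d × Fin d) ℂ) :
    extendId N * U12 V = extendId (N * V) := by
  ext p q
  simp [U12, extendId, Matrix.mul_apply, Fintype.sum_prod_type, ite_mul, mul_ite,
    Finset.sum_ite_eq, Finset.sum_ite_eq', Finset.mul_sum, Finset.sum_mul]

lemma U12_conjTranspose (V : Matrix (Fin d × Fin d) (Fin d × Fin d) ℂ) :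
    (U12 V)ᴴ = U12 Vᴴ := by
  ext p q
  simp [U12, Matrix.conjTranspose_apply, apply_ite (starRingEnd ℂ), eq_comm]

lemma U23_comm_ext (A : Matrix (Fin d) (Fin d) ℂ)
    (V : Matrix (Fin d × Fin d) (Fin d × Fin d) ℂ) :
    U23 V * extendId (A ⊗ₖ (1 : Matrix (Fin d) (Fin d) ℂ)) =
      extendId (A ⊗ₖ (1 : Matrix (Fin d) (Fin d) ℂ)) * U23 V := by
  ext p q
  simp [U23, extendId, Matrix.mul_apply, Fintype.sum_prod_type, ite_mul, mul_ite,
    Finset.sum_ite_eq, Finset.sum_ite_eq', Finset.mul_sum, Finset.sum_mul,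
    Matrix.one_apply, mul_comm]

lemma partialTrace₁'_extendId (N : Matrix (Fin d × Fin d) (Fin d × Fin d) ℂ) :
    partialTrace₁' (extendId N) =
      partialTrace₁ N ⊗ₖ (1 : Matrix (Fin d) (Fin d) ℂ) := by
  ext p q
  simp [partialTrace₁, partialTrace₁', extendId, Matrix.one_apply, Finset.sum_mul]

end BrickAux

/-- If `Φ₁(A) = z·A` then `Φ₂(A ⊗ I) = z·(A ⊗ I)`; consequently the spectrum of
`Φ₁` is a subset of the spectrum of `Φ₂`. -/
theorem spectrum_Phi1_subset_spectrum_Phi2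
    {d : ℕ} (U : Matrix (Fin d × Fin d) (Fin d × Fin d) ℂ)
    (hU : U ∈ Matrix.unitaryGroup (Fin d × Fin d) ℂ)
    (Φ₁ : Matrix (Fin d) (Fin d) ℂ → Matrix (Fin d) (Fin d) ℂ)
    (hΦ₁ : ∀ ρ, Φ₁ ρ = ((d : ℂ)⁻¹) •
      partialTrace₁ (U * (ρ ⊗ₖ (1 : Matrix (Fin d) (Fin d) ℂ)) * Uᴴ))
    (Φ₂ : Matrix (Fin d × Fin d) (Fin d × Fin d) ℂ →
      Matrix (Fin d × Fin d) (Fin d × Fin d) ℂ)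
    (hΦ₂ : ∀ ρ, Φ₂ ρ = ((d : ℂ)⁻¹) •
      partialTrace₁' (U12 U * U23 U * extendId ρ * (U23 U)ᴴ * (U12 U)ᴴ))
    (z : ℂ) (A : Matrix (Fin d) (Fin d) ℂ) (hA : Φ₁ A = z • A) :
    Φ₂ (A ⊗ₖ (1 : Matrix (Fin d) (Fin d) ℂ)) =
        z • (A ⊗ₖ (1 : Matrix (Fin d) (Fin d) ℂ)) ∧
      (A ≠ 0 → ∃ B : Matrix (Fin d × Fin d) (Fin d × Fin d) ℂ,
        B ≠ 0 ∧ Φ₂ B = z • B) := by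
  have hUU : U * Uᴴ = 1 := by
    have := Matrix.mem_unitaryGroup_iff.mp hU
    rwa [Matrix.star_eq_conjTranspose] at this
  have key : Φ₂ (A ⊗ₖ (1 : Matrix (Fin d) (Fin d) ℂ)) =
      z • (A ⊗ₖ (1 : Matrix (Fin d) (Fin d) ℂ)) := by
    have h1 : U12 U * U23 U * extendId (A ⊗ₖ (1 : Matrix (Fin d) (Fin d) ℂ)) *
        (U23 U)ᴴ * (U12 U)ᴴ =
        extendId (U * (A ⊗ₖ (1 : Matrix (Fin d) (Fin d) ℂ)) * Uᴴ) := by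
      rw [mul_assoc (U12 U), BrickAux.U23_comm_ext, mul_assoc (U12 U), mul_assoc,
        BrickAux.U23_conjTranspose, mul_assoc (extendId _) (U23 U),
        BrickAux.U23_mul_U23, hUU, BrickAux.U23_one,
        mul_one, ← mul_assoc, BrickAux.U12_mul_extendId, BrickAux.U12_conjTranspose,
        BrickAux.extendId_mul_U12]
    rw [hΦ₂, h1, BrickAux.partialTrace₁'_extendId, ← Matrix.smul_kronecker,
      ← hΦ₁, hA, Matrix.smul_kronecker]
  refine ⟨key, fun hA0 => ⟨A ⊗ₖ (1 : Matrix (Fin d) (Fin d) ℂ), ?_, key⟩⟩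
  intro h
  apply hA0
  ext i i'
  have := congrFun (congrFun h (i, i)) (i', i)
  simpa using this

end
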